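/- Let G be a connected Feynman graph and let e_1 ≠ e_2 be two distinct edges of G. Then there exist k ≥ 0 and a locally injective morphism p : L^k → G such that e_1 and e_2 both lie in the image of the edge component p_E. -/

import Mathlib

/-- A Feynman graph: finite sets of edges `E`, half-edges `H`, vertices `V`,
with an injective attachment `s : H → E`, a target map `t : H → V`, and a
fixed-point-free involution `inv : E → E`. -/
structure FG where
  E : Type
  H : Type
  V : Type
  finE : Finite E
  finH : Finite H
  finV : Finite V
  s : H → E
  t : H → V
  inv : E → E
  s_inj : Function.Injective s
  inv_inv : ∀ e, inv (inv e) = e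
  inv_ne : ∀ e, inv e ≠ e

attribute [instance] FG.finE FG.finH FG.finV

/-- A morphism of Feynman graphs. -/
structure FGHom (G G' : FG) where
  fE : G.E → G'.E
  fH : G.H → G'.H
  fV : G.V → G'.V
  comm_inv : ∀ e, fE (G.inv e) = G'.inv (fE e)
  comm_s : ∀ h, fE (G.s h) = G'.s (fH h)
  comm_t : ∀ h, fV (G.t h) = G'.t (fH h)

/-- Composition of morphisms of Feynman graphs. -/
def FGHom.comp {G₁ G₂ G₃ : FG} (g : FGHom G₂ G₃) (f : FGHom G₁ G₂) : FGHom G₁ G₃ where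
  fE := g.fE ∘ f.fE
  fH := g.fH ∘ f.fH
  fV := g.fV ∘ f.fV
  comm_inv := fun e => by simp only [Function.comp_apply, f.comm_inv, g.comm_inv]
  comm_s := fun h => by simp only [Function.comp_apply, f.comm_s, g.comm_s]
  comm_t := fun h => by simp only [Function.comp_apply, f.comm_t, g.comm_t]

/-- A morphism is an isomorphism if all three components are bijections. -/
def FGHom.IsIso {G G' : FG} (f : FGHom G G') : Prop :=
  Function.Bijective f.fE ∧ Function.Bijective f.fH ∧ Function.Bijective f.fV

/-- A morphism is locally injective if it is injective on each fibre `t⁻¹(v)`. -/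
def FGHom.LocInj {G G' : FG} (f : FGHom G G') : Prop :=
  ∀ h₁ h₂ : G.H, G.t h₁ = G.t h₂ → f.fH h₁ = f.fH h₂ → h₁ = h₂

/-- A morphism is étale if it induces a bijection `t⁻¹(v) → t'⁻¹(f_V v)`
for every vertex `v`. -/
def FGHom.Etale {G G' : FG} (f : FGHom G G') : Prop :=
  f.LocInj ∧
  ∀ (v : G.V) (h' : G'.H), G'.t h' = f.fV v → ∃ h : G.H, G.t h = v ∧ f.fH h = h'

/-- A port is an edge not in the image of `s`. -/
def FG.IsPort (G : FG) (e : G.E) : Prop := e ∉ Set.range G.s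

/-- An inner edge: both `e` and `inv e` are in the image of `s`. -/
def FG.IsInner (G : FG) (e : G.E) : Prop :=
  e ∈ Set.range G.s ∧ G.inv e ∈ Set.range G.s

/-- Connectedness: `E ⊔ V` is nonempty and every compatible `Bool`-colouring
of edges and vertices is constant. -/
def FG.Connected (G : FG) : Prop :=
  Nonempty (G.E ⊕ G.V) ∧
  ∀ (cE : G.E → Bool) (cV : G.V → Bool),
    (∀ e, cE (G.inv e) = cE e) →
    (∀ h, cV (G.t h) = cE (G.s h)) →
    ∀ x y : G.E ⊕ G.V, Sum.elim cE cV x = Sum.elim cE cV y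

/-- The line graph `L^k` (for `k ≥ 0`): edges `l_0, …, l_{2k+1}` (here the pair
`{l_{2j}, l_{2j+1}}` is encoded as `(j, false)` and `(j, true)`), `k` vertices,
and `2k` half-edges attaching `l_{2i-1}` and `l_{2i}` to the vertex `v_i`. -/
def lineGraph (k : ℕ) : FG where
  E := Fin (k+1) × Bool
  H := Fin k × Bool
  V := Fin k
  finE := inferInstance
  finH := inferInstance
  finV := inferInstance
  s := fun p => if p.2 then (p.1.castSucc, true) else (p.1.succ, false)
  t := fun p => p.1
  inv := fun p => (p.1, !p.2)
  s_inj := by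
    rintro ⟨i, bi⟩ ⟨j, bj⟩ hij
    cases bi <;> cases bj <;> simp_all [Fin.succ_inj, Fin.castSucc_inj]
  inv_inv := by rintro ⟨i, b⟩; simp
  inv_ne := by
    rintro ⟨i, b⟩ h
    rw [Prod.mk.injEq] at h
    exact (Bool.not_ne_self b) h.2

/-- The wheel graph `W^{m+1}` (this definition, with parameter `m : ℕ`, yields
exactly the wheel graphs `W^m` for `m ≥ 1`): `m+1` vertices in `Fin (m+1)`,
the vertex `i` carrying the two edges `(i, false)` and `(i, true)` (which are
also the half-edges, via `s = id`), and the involution pairing `(i, true)`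
with `(i+1, false)` cyclically. -/
def wheelGraph (m : ℕ) : FG where
  E := Fin (m+1) × Bool
  H := Fin (m+1) × Bool
  V := Fin (m+1)
  finE := inferInstance
  finH := inferInstance
  finV := inferInstance
  s := id
  t := fun p => p.1
  inv := fun p => if p.2 then (p.1 + 1, false) else (p.1 - 1, true)
  s_inj := fun _ _ h => h
  inv_inv := by
    rintro ⟨i, b⟩
    cases b <;> simp
  inv_ne := by
    rintro ⟨i, b⟩ h
    cases b <;> simp_all
namespace FGaux

variable {G : FG}

/-- One step of a locally-injective walk on edges: from `e` we can pass
through a common vertex to the edge `f` (entering via `G.inv f`). -/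
def Step (G : FG) (e f : G.E) : Prop :=
  e ≠ G.inv f ∧ ∃ h h', G.s h = e ∧ G.s h' = G.inv f ∧ G.t h = G.t h'

lemma step_rev {e f : G.E} (h : Step G e f) : Step G (G.inv f) (G.inv e) := by
  obtain ⟨hne, h1, h2, hs1, hs2, ht⟩ := h
  refine ⟨?_, h2, h1, hs2, by rw [hs1, G.inv_inv], ht.symm⟩
  rw [G.inv_inv]
  exact fun hh => hne hh.symm

lemma reach_rev {e f : G.E} (h : Relation.ReflTransGen (Step G) e f) :
    Relation.ReflTransGen (Step G) (G.inv f) (G.inv e) := by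
  induction h with
  | refl => exact Relation.ReflTransGen.refl
  | tail hab hbc ih => exact Relation.ReflTransGen.head (step_rev hbc) ih

/-- For a morphism from a line graph, the image of edges is closed under `inv`. -/
lemma fE_inv {k : ℕ} (p : FGHom (lineGraph k) G) (x : Fin (k+1) × Bool) :
    p.fE (x.1, !x.2) = G.inv (p.fE x) :=
  p.comm_inv x

/-- The trivial path `L^0 → G` on an edge `a`. -/
def basePath (G : FG) (a : G.E) : FGHom (lineGraph 0) G where
  fE := fun x => if x.2 then a else G.inv a
  fH := fun x => x.1.elim0
  fV := fun v => v.elim0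
  comm_inv := by rintro ⟨j, _ | _⟩ <;> simp [lineGraph, G.inv_inv]
  comm_s := fun h => h.1.elim0
  comm_t := fun h => h.1.elim0

/-- Extending a path `L^k → G` ending at edge `b = p.fE (last, true)` by a step to `c`. -/
def extPath {k : ℕ} (p : FGHom (lineGraph k) G) (c : G.E) (ha hb : G.H)
    (hsa : G.s ha = p.fE (Fin.last k, true)) (hsb : G.s hb = G.inv c)
    (htt : G.t ha = G.t hb) : FGHom (lineGraph (k+1)) G where
  fE := fun x => if h : (x.1 : ℕ) < k + 1 then p.fE (⟨x.1, h⟩, x.2)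
    else if x.2 then c else G.inv c
  fH := fun x => if h : (x.1 : ℕ) < k then p.fH (⟨x.1, h⟩, x.2)
    else if x.2 then ha else hb
  fV := fun (v : Fin (k+1)) => if h : (v : ℕ) < k then p.fV ⟨v, h⟩ else G.t ha
  comm_inv := by
    rintro ⟨j, bb⟩
    show (if h : (j:ℕ) < k + 1 then p.fE (⟨j, h⟩, !bb) else if !bb then c else G.inv c)
      = G.inv (if h : (j:ℕ) < k + 1 then p.fE (⟨j, h⟩, bb) else if bb then c else G.inv c)
    by_cases h : (j:ℕ) < k + 1
    · rw [dif_pos h, dif_pos h]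
      exact p.comm_inv (⟨j, h⟩, bb)
    · rw [dif_neg h, dif_neg h]
      cases bb <;> simp [G.inv_inv]
  comm_s := by
    rintro ⟨i, bb⟩
    simp only [lineGraph]
    cases bb
    · simp only [Bool.false_eq_true, ite_false]
      by_cases hi : (i : ℕ) < k
      · have h1 : ((i.succ : Fin (k+2)) : ℕ) < k + 1 := by
          simp only [Fin.val_succ]; omega
        rw [dif_pos h1, dif_pos hi]
        have hcs := p.comm_s ((⟨(i : ℕ), hi⟩ : Fin k), false)
        simp only [lineGraph, Bool.false_eq_true, ite_false] at hcs
        have he : (⟨((i.succ : Fin (k+2)) : ℕ), h1⟩ : Fin (k+1))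
            = ((⟨(i : ℕ), hi⟩ : Fin k)).succ := by
          ext; simp [Fin.val_succ]
        rw [he]; exact hcs
      · have hik : (i : ℕ) = k := by have := i.isLt; omega
        have h1 : ¬ ((i.succ : Fin (k+2)) : ℕ) < k + 1 := by
          simp only [Fin.val_succ]; omega
        rw [dif_neg h1, dif_neg hi]
        exact hsb.symm
    · simp only [ite_true]
      have h1 : ((i.castSucc : Fin (k+2)) : ℕ) < k + 1 := by
        simp only [Fin.coe_castSucc]; exact i.isLt
      rw [dif_pos h1]
      by_cases hi : (i : ℕ) < k
      · rw [dif_pos hi]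
        have hcs := p.comm_s ((⟨(i : ℕ), hi⟩ : Fin k), true)
        simp only [lineGraph, ite_true] at hcs
        have he : (⟨((i.castSucc : Fin (k+2)) : ℕ), h1⟩ : Fin (k+1))
            = ((⟨(i : ℕ), hi⟩ : Fin k)).castSucc := by
          ext; simp
        rw [he]; exact hcs
      · rw [dif_neg hi]
        rw [hsa]
        have hik : (i : ℕ) = k := by have := i.isLt; omega
        have he : (⟨((i.castSucc : Fin (k+2)) : ℕ), h1⟩ : Fin (k+1)) = Fin.last k := by
          ext; simp [hik]
        rw [he]
  comm_t := by
    rintro ⟨i, bb⟩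
    show (if h : (i:ℕ) < k then p.fV ⟨i, h⟩ else G.t ha)
      = G.t (if h : (i:ℕ) < k then p.fH (⟨i, h⟩, bb) else if bb then ha else hb)
    by_cases hi : (i:ℕ) < k
    · rw [dif_pos hi, dif_pos hi]
      exact p.comm_t (⟨i, hi⟩, bb)
    · rw [dif_neg hi, dif_neg hi]
      cases bb
      · simpa using htt
      · simp

lemma extPath_locInj {k : ℕ} (p : FGHom (lineGraph k) G) (c : G.E) (ha hb : G.H)
    (hsa : G.s ha = p.fE (Fin.last k, true)) (hsb : G.s hb = G.inv c)
    (htt : G.t ha = G.t hb) (hp : p.LocInj)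
    (hne : p.fE (Fin.last k, true) ≠ G.inv c) :
    (extPath p c ha hb hsa hsb htt).LocInj := by
  rintro ⟨i1, b1⟩ ⟨i2, b2⟩ hti hH
  have hi : i1 = i2 := hti
  subst hi
  by_cases hbb : b1 = b2
  · rw [hbb]
  · exfalso
    simp only [extPath] at hH
    by_cases hik : (i1:ℕ) < k
    · rw [dif_pos hik, dif_pos hik] at hH
      have := hp (⟨i1, hik⟩, b1) (⟨i1, hik⟩, b2) rfl hH
      exact hbb (congrArg Prod.snd this)
    · rw [dif_neg hik, dif_neg hik] at hH
      have : ha = hb := by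
        cases b1 <;> cases b2 <;> simp_all
      apply hne
      rw [← hsa, this, hsb]


lemma extPath_fE_castSucc {k : ℕ} (p : FGHom (lineGraph k) G) (c : G.E) (ha hb : G.H)
    (hsa : G.s ha = p.fE (Fin.last k, true)) (hsb : G.s hb = G.inv c)
    (htt : G.t ha = G.t hb) (x : Fin (k+1) × Bool) :
    (extPath p c ha hb hsa hsb htt).fE (x.1.castSucc, x.2) = p.fE x := by
  have h1 : ((x.1.castSucc : Fin (k+2)):ℕ) < k + 1 := by have := x.1.isLt; simp; omega
  simp only [extPath, dif_pos h1]
  have he : (⟨((x.1.castSucc : Fin (k+2)) : ℕ), h1⟩ : Fin (k+1)) = x.1 := by ext; simp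
  rw [he]

lemma extPath_fE_last {k : ℕ} (p : FGHom (lineGraph k) G) (c : G.E) (ha hb : G.H)
    (hsa : G.s ha = p.fE (Fin.last k, true)) (hsb : G.s hb = G.inv c)
    (htt : G.t ha = G.t hb) :
    (extPath p c ha hb hsa hsb htt).fE (Fin.last (k+1), true) = c := by
  have h1 : ¬ ((Fin.last (k+1) : Fin (k+2)):ℕ) < k + 1 := by simp
  simp [extPath, dif_neg h1]

lemma reach_path (a : G.E) {b : G.E} (h : Relation.ReflTransGen (Step G) a b) :
    ∃ (k : ℕ) (p : FGHom (lineGraph k) G), p.LocInj ∧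
      p.fE (Fin.last k, true) = b ∧ ∃ x, p.fE x = a := by
  induction h with
  | refl =>
    refine ⟨0, basePath G a, ?_, ?_, ⟨(0, true), ?_⟩⟩
    · intro h1 _ _ _; exact h1.1.elim0
    · simp [basePath]
    · simp [basePath]
  | tail hab hbc ih =>
    obtain ⟨k, p, hli, hlast, x, hx⟩ := ih
    obtain ⟨hnee, h1, h2, hs1, hs2, htt⟩ := hbc
    have hsa : G.s h1 = p.fE (Fin.last k, true) := hs1.trans hlast.symm
    refine ⟨k+1, extPath p _ h1 h2 hsa hs2 htt,
      extPath_locInj p _ h1 h2 hsa hs2 htt hli (by rw [hlast]; exact hnee),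
      extPath_fE_last p _ h1 h2 hsa hs2 htt,
      ⟨(x.1.castSucc, x.2), by exact (extPath_fE_castSucc p _ h1 h2 hsa hs2 htt x).trans hx⟩⟩

end FGaux

theorem exists_locallyInjective_path_connecting_edges (G : FG)
    (hconn : G.Connected) (e₁ e₂ : G.E) (hne : e₁ ≠ e₂) :
    ∃ (k : ℕ) (p : FGHom (lineGraph k) G),
      p.LocInj ∧ (∃ a, p.fE a = e₁) ∧ (∃ a, p.fE a = e₂) := by
  classical
  set S : G.E → Prop := fun f => ∃ a, (a = e₁ ∨ a = G.inv e₁) ∧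
    (Relation.ReflTransGen (FGaux.Step G) a f ∨
      Relation.ReflTransGen (FGaux.Step G) a (G.inv f)) with hSdef
  have hSinv : ∀ f, S (G.inv f) ↔ S f := by
    intro f
    simp only [hSdef, G.inv_inv]
    constructor <;> rintro ⟨a, hae, hr⟩ <;> exact ⟨a, hae, hr.symm⟩
  have hclo : ∀ hA hB : G.H, G.t hA = G.t hB → S (G.s hA) → S (G.s hB) := by
    intro hA hB htAB hSA
    by_cases hss : G.s hA = G.s hB
    · rwa [hss] at hSA
    obtain ⟨a, hae, hr⟩ := hSA
    rcases hr with hr | hr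
    · refine ⟨a, hae, Or.inr (hr.tail ?_)⟩
      refine ⟨?_, hA, hB, rfl, by rw [G.inv_inv], htAB⟩
      rw [G.inv_inv]; exact hss
    · rcases hr.cases_tail with heq | ⟨c, hac, hstep⟩
      · -- heq : G.inv (G.s hA) = a
        have hstep1 : FGaux.Step G (G.s hB) (G.inv (G.s hA)) := by
          refine ⟨?_, hB, hA, rfl, by rw [G.inv_inv], htAB.symm⟩
          rw [G.inv_inv]; exact fun hh => hss hh.symm
        have hstep2 := FGaux.step_rev hstep1
        rw [G.inv_inv] at hstep2
        -- hstep2 : Step G (G.s hA)?? no: Step G (G.inv (G.inv (G.s hA))) (G.inv (G.s hB))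
        refine ⟨G.inv a, ?_, Or.inr ?_⟩
        · rcases hae with h | h
          · exact Or.inr (by rw [h])
          · exact Or.inl (by rw [h, G.inv_inv])
        · exact Relation.ReflTransGen.single (by rw [← heq, G.inv_inv]; exact hstep2)
      · obtain ⟨hne2, h1, h2, hs1, hs2, htt2⟩ := hstep
        have hh2 : h2 = hA := G.s_inj (by rw [hs2, G.inv_inv])
        by_cases hc : c = G.s hB
        · exact ⟨a, hae, Or.inl (hc ▸ hac)⟩
        · refine ⟨a, hae, Or.inr (hac.tail ?_)⟩
          refine ⟨by rw [G.inv_inv]; exact hc, h1, hB, hs1, by rw [G.inv_inv], ?_⟩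
          rw [htt2, hh2]; exact htAB
  have hSe₁ : S e₁ := ⟨e₁, Or.inl rfl, Or.inl Relation.ReflTransGen.refl⟩
  have hSe₂ : S e₂ := by
    have key := hconn.2 (fun e => decide (S e))
      (fun v => decide (∀ hh, G.t hh = v → S (G.s hh)))
      (fun e => by simp only [decide_eq_decide]; exact hSinv e)
      (fun hh => by
        simp only [decide_eq_decide]
        constructor
        · intro hall; exact hall hh rfl
        · intro hs h2 h2t; exact hclo hh h2 h2t.symm hs)
      (Sum.inl e₂) (Sum.inl e₁)
    simp only [Sum.elim_inl, decide_eq_decide] at key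
    exact key.mpr hSe₁
  obtain ⟨a, hae, hr⟩ := hSe₂
  have hstart : ∀ {k : ℕ} (p : FGHom (lineGraph k) G),
      (∃ x, p.fE x = a) → ∃ x, p.fE x = e₁ := by
    rintro k p ⟨x, hx⟩
    rcases hae with h | h
    · exact ⟨x, h ▸ hx⟩
    · exact ⟨(x.1, !x.2), (FGaux.fE_inv p x).trans (by rw [hx, h, G.inv_inv])⟩
  rcases hr with hr | hr
  · obtain ⟨k, p, hli, hlast, hx⟩ := FGaux.reach_path a hr
    exact ⟨k, p, hli, hstart p hx, ⟨(Fin.last k, true), hlast⟩⟩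
  · obtain ⟨k, p, hli, hlast, hx⟩ := FGaux.reach_path a hr
    refine ⟨k, p, hli, hstart p hx, ⟨(Fin.last k, false), ?_⟩⟩
    have := FGaux.fE_inv p (Fin.last k, true)
    rw [hlast, G.inv_inv] at this
    exact this
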